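/- For real q with 0<q<1 and integer s≥1, lim_{q→1⁻} (1-q)^s ζ_q(s) = (s-1)! ζ(s) for s≥2, where ζ is the Riemann zeta function. -/

import Mathlib

open Filter Set Real

namespace ZetaqAux

noncomputable def F (p : ℕ) (x : ℝ) : ℝ := ∑' n : ℕ, ((n : ℝ) + 1) ^ p * x ^ (n + 1)

lemma pow_le_cast_choose (p n : ℕ) :
    ((n : ℝ) + 1) ^ p ≤ (p.factorial : ℝ) * ((n + p).choose p : ℝ) := by
  have h : (n + 1) ^ p ≤ p.factorial * (n + p).choose p := by
    calc (n + 1) ^ p ≤ (n + 1).ascFactorial p := Nat.pow_succ_le_ascFactorial (n + 1) p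
      _ = p.factorial * (n + p).choose p := Nat.ascFactorial_eq_factorial_mul_choose n p
  exact_mod_cast h

lemma F_summable {p : ℕ} {x : ℝ} (hx0 : 0 ≤ x) (hx1 : x < 1) :
    Summable (fun n : ℕ => ((n : ℝ) + 1) ^ p * x ^ (n + 1)) := by
  have hx : ‖x‖ < 1 := by rwa [Real.norm_eq_abs, abs_of_nonneg hx0]
  have h := (summable_choose_mul_geometric_of_norm_lt_one p hx).mul_left
    ((p.factorial : ℝ) * x)
  refine h.of_nonneg_of_le (fun n => by positivity) (fun n => ?_)
  calc ((n : ℝ) + 1) ^ p * x ^ (n + 1) = ((n : ℝ) + 1) ^ p * x ^ n * x := by ring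
    _ ≤ (p.factorial : ℝ) * ((n + p).choose p : ℝ) * x ^ n * x := by
        gcongr
        exact pow_le_cast_choose p n
    _ = (p.factorial : ℝ) * x * (((n + p).choose p : ℝ) * x ^ n) := by ring

lemma F_nonneg {p : ℕ} {x : ℝ} (hx0 : 0 ≤ x) : 0 ≤ F p x :=
  tsum_nonneg fun n => by positivity

lemma F_upper {p : ℕ} {x : ℝ} (hx0 : 0 ≤ x) (hx1 : x < 1) :
    F p x ≤ (p.factorial : ℝ) * x / (1 - x) ^ (p + 1) := by
  have hx : ‖x‖ < 1 := by rwa [Real.norm_eq_abs, abs_of_nonneg hx0]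
  have hgeom := (hasSum_choose_mul_geometric_of_norm_lt_one p hx).mul_left
    ((p.factorial : ℝ) * x)
  refine le_trans ((F_summable hx0 hx1).tsum_le_tsum (fun n => ?_) hgeom.summable) ?_
  · calc ((n : ℝ) + 1) ^ p * x ^ (n + 1) = ((n : ℝ) + 1) ^ p * x ^ n * x := by ring
      _ ≤ (p.factorial : ℝ) * ((n + p).choose p : ℝ) * x ^ n * x := by
          gcongr
          exact pow_le_cast_choose p n
      _ = (p.factorial : ℝ) * x * (((n + p).choose p : ℝ) * x ^ n) := by ring
  · rw [hgeom.tsum_eq]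
    rw [mul_one_div]

lemma F_lower {t : ℕ} {x : ℝ} (hx0 : 0 ≤ x) (hx1 : x < 1) :
    ((t + 1).factorial : ℝ) * x ^ (t + 1) / (1 - x) ^ (t + 2) ≤ F (t + 1) x := by
  set p := t + 1 with hp
  have hx : ‖x‖ < 1 := by rwa [Real.norm_eq_abs, abs_of_nonneg hx0]
  have hgeom := (hasSum_choose_mul_geometric_of_norm_lt_one p hx).mul_left
    ((p.factorial : ℝ) * x ^ p)
  have key : ∑' n : ℕ, (p.factorial : ℝ) * x ^ p * (((n + p).choose p : ℝ) * x ^ n)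
      ≤ F p x := by
    refine hgeom.summable.tsum_le_tsum_of_inj (fun n => n + t) (fun a b h => by simpa using h)
      (fun c _ => by positivity) (fun n => ?_) (F_summable hx0 hx1)
    have hnat : p.factorial * ((n + p).choose p) ≤ (n + p) ^ p := by
      rw [← Nat.descFactorial_eq_factorial_mul_choose]
      exact Nat.descFactorial_le_pow _ _
    have hcast : (p.factorial : ℝ) * ((n + p).choose p : ℝ) ≤ ((n + t : ℕ) + 1 : ℝ) ^ p := by
      have : ((n + t : ℕ) : ℝ) + 1 = ((n + p : ℕ) : ℝ) := by push_cast [hp]; ring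
      rw [this]
      exact_mod_cast hnat
    calc (p.factorial : ℝ) * x ^ p * (((n + p).choose p : ℝ) * x ^ n)
        = (p.factorial : ℝ) * ((n + p).choose p : ℝ) * x ^ (n + t + 1) := by
          rw [show n + t + 1 = p + n by omega, pow_add]; ring
      _ ≤ (((n + t : ℕ) : ℝ) + 1) ^ p * x ^ (n + t + 1) := by
          have hxp : (0:ℝ) ≤ x ^ (n + t + 1) := by positivity
          exact mul_le_mul_of_nonneg_right (by exact_mod_cast hcast) hxp
  calc ((t + 1).factorial : ℝ) * x ^ (t + 1) / (1 - x) ^ (t + 2)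
      = (p.factorial : ℝ) * x ^ p * (1 / (1 - x) ^ (p + 1)) := by rw [hp, mul_one_div]
    _ = ∑' n : ℕ, (p.factorial : ℝ) * x ^ p * (((n + p).choose p : ℝ) * x ^ n) := by
        rw [hgeom.tsum_eq]
    _ ≤ F p x := key


lemma one_sub_pow_eq {q : ℝ} (k : ℕ) :
    1 - q ^ k = (1 - q) * ∑ i ∈ Finset.range k, q ^ i := by
  have h := geom_sum_mul q k
  linear_combination h

lemma sum_pos {q : ℝ} (hq : q ∈ Ioo (0:ℝ) 1) (k : ℕ) (hk : 1 ≤ k) :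
    0 < ∑ i ∈ Finset.range k, q ^ i := by
  refine Finset.sum_pos (fun i _ => pow_pos hq.1 i) ?_
  exact ⟨0, Finset.mem_range.2 (by omega)⟩

lemma tendsto_ratio (k : ℕ) (hk : 1 ≤ k) :
    Tendsto (fun q : ℝ => (1 - q) / (1 - q ^ k)) (nhdsWithin 1 (Ioo (0:ℝ) 1))
      (nhds (1 / (k : ℝ))) := by
  have hcont : Tendsto (fun q : ℝ => (∑ i ∈ Finset.range k, q ^ i)⁻¹)
      (nhdsWithin 1 (Ioo (0:ℝ) 1)) (nhds (1 / (k : ℝ))) := by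
    have h1 : Tendsto (fun q : ℝ => ∑ i ∈ Finset.range k, q ^ i) (nhds 1)
        (nhds (k : ℝ)) := by
      have := (continuous_finset_sum (Finset.range k)
        (fun i _ => (continuous_pow i : Continuous fun q:ℝ => q ^ i))).tendsto 1
      simpa using this
    have h2 := (h1.inv₀ (Nat.cast_ne_zero.2 (by omega) : (k:ℝ) ≠ 0)).mono_left
      (nhdsWithin_le_nhds (s := Ioo (0:ℝ) 1))
    simpa [one_div] using h2
  refine hcont.congr' ?_
  filter_upwards [self_mem_nhdsWithin] with q hq
  rw [one_sub_pow_eq k,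
    div_mul_cancel_left₀ (ne_of_gt (by linarith [hq.2] : (0:ℝ) < 1 - q)) _]

lemma term_upper {t k : ℕ} (hk : 1 ≤ k) {q : ℝ} (hq : q ∈ Ioo (0:ℝ) 1) :
    (1 - q) ^ (t + 2) * F (t + 1) (q ^ k)
      ≤ ((t + 1).factorial : ℝ) * q ^ k * ((1 - q) / (1 - q ^ k)) ^ (t + 2) := by
  have hq0 : (0:ℝ) < q ^ k := pow_pos hq.1 k
  have hq1 : q ^ k < 1 := pow_lt_one₀ hq.1.le hq.2 (by omega)
  have h1q : (0:ℝ) < 1 - q := by linarith [hq.2]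
  have h1qk : (0:ℝ) < 1 - q ^ k := by linarith
  have h := F_upper (p := t + 1) hq0.le hq1
  calc (1 - q) ^ (t + 2) * F (t + 1) (q ^ k)
      ≤ (1 - q) ^ (t + 2) * (((t + 1).factorial : ℝ) * q ^ k / (1 - q ^ k) ^ (t + 2)) := by
        exact mul_le_mul_of_nonneg_left h (by positivity)
    _ = ((t + 1).factorial : ℝ) * q ^ k * ((1 - q) / (1 - q ^ k)) ^ (t + 2) := by
        rw [div_pow]; field_simp

lemma term_lower {t k : ℕ} (hk : 1 ≤ k) {q : ℝ} (hq : q ∈ Ioo (0:ℝ) 1) :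
    ((t + 1).factorial : ℝ) * q ^ (k * (t + 1)) * ((1 - q) / (1 - q ^ k)) ^ (t + 2)
      ≤ (1 - q) ^ (t + 2) * F (t + 1) (q ^ k) := by
  have hq0 : (0:ℝ) < q ^ k := pow_pos hq.1 k
  have hq1 : q ^ k < 1 := pow_lt_one₀ hq.1.le hq.2 (by omega)
  have h1q : (0:ℝ) < 1 - q := by linarith [hq.2]
  have h1qk : (0:ℝ) < 1 - q ^ k := by linarith
  have h := F_lower (t := t) hq0.le hq1
  calc ((t + 1).factorial : ℝ) * q ^ (k * (t + 1)) * ((1 - q) / (1 - q ^ k)) ^ (t + 2)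
      = (1 - q) ^ (t + 2) *
          (((t + 1).factorial : ℝ) * (q ^ k) ^ (t + 1) / (1 - q ^ k) ^ (t + 2)) := by
        rw [div_pow, ← pow_mul]; field_simp
    _ ≤ (1 - q) ^ (t + 2) * F (t + 1) (q ^ k) :=
        mul_le_mul_of_nonneg_left h (by positivity)

lemma term_tendsto (t k : ℕ) (hk : 1 ≤ k) :
    Tendsto (fun q : ℝ => (1 - q) ^ (t + 2) * F (t + 1) (q ^ k))
      (nhdsWithin 1 (Ioo (0:ℝ) 1))
      (nhds (((t + 1).factorial : ℝ) / (k : ℝ) ^ (t + 2))) := by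
  have hqpow : ∀ m : ℕ, Tendsto (fun q : ℝ => q ^ m) (nhdsWithin 1 (Ioo (0:ℝ) 1))
      (nhds 1) := by
    intro m
    have := ((continuous_pow m : Continuous fun q:ℝ => q ^ m).tendsto 1).mono_left
      (nhdsWithin_le_nhds (s := Ioo (0:ℝ) 1))
    simpa using this
  have hratio := (tendsto_ratio k hk).pow (t + 2)
  have hlow : Tendsto (fun q : ℝ => ((t + 1).factorial : ℝ) * q ^ (k * (t + 1))
      * ((1 - q) / (1 - q ^ k)) ^ (t + 2)) (nhdsWithin 1 (Ioo (0:ℝ) 1))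
      (nhds (((t + 1).factorial : ℝ) / (k : ℝ) ^ (t + 2))) := by
    have := ((tendsto_const_nhds (x := ((t + 1).factorial : ℝ))).mul
      (hqpow (k * (t + 1)))).mul hratio
    convert this using 2
    rw [mul_one, div_pow, one_pow, mul_one_div]
  have hup : Tendsto (fun q : ℝ => ((t + 1).factorial : ℝ) * q ^ k
      * ((1 - q) / (1 - q ^ k)) ^ (t + 2)) (nhdsWithin 1 (Ioo (0:ℝ) 1))
      (nhds (((t + 1).factorial : ℝ) / (k : ℝ) ^ (t + 2))) := by
    have := ((tendsto_const_nhds (x := ((t + 1).factorial : ℝ))).mul (hqpow k)).mul hratio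
    convert this using 2
    rw [mul_one, div_pow, one_pow, mul_one_div]
  refine tendsto_of_tendsto_of_tendsto_of_le_of_le' hlow hup ?_ ?_
  · filter_upwards [self_mem_nhdsWithin] with q hq
    exact term_lower hk hq
  · filter_upwards [self_mem_nhdsWithin] with q hq
    exact term_upper hk hq


lemma term_bound (t k : ℕ) (hk : 1 ≤ k) {q : ℝ} (hq : q ∈ Ioo (0:ℝ) 1) :
    (1 - q) ^ (t + 2) * F (t + 1) (q ^ k)
      ≤ ((t + 1).factorial : ℝ) * 2 ^ (t + 2) * ((t + 2).factorial : ℝ) / (k : ℝ) ^ (t + 2) := by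
  have hq0 : (0:ℝ) < q ^ k := pow_pos hq.1 k
  have hq1 : q ^ k < 1 := pow_lt_one₀ hq.1.le hq.2 (by omega)
  have h1q : (0:ℝ) < 1 - q := by linarith [hq.2]
  have h1qk : (0:ℝ) < 1 - q ^ k := by linarith
  have hkR : (0:ℝ) < (k : ℝ) := by exact_mod_cast (by omega : 0 < k)
  have hkpow : (0:ℝ) < (k : ℝ) ^ (t + 2) := pow_pos hkR _
  have hfac2 : (1:ℝ) ≤ ((t + 2).factorial : ℝ) := by
    exact_mod_cast Nat.one_le_iff_ne_zero.2 (t + 2).factorial_ne_zero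
  have hr0 : (0:ℝ) ≤ (1 - q) / (1 - q ^ k) := div_nonneg h1q.le h1qk.le
  have hup := term_upper (t := t) hk hq
  rcases le_or_gt (1/2 : ℝ) (q ^ k) with hcase | hcase
  · have hS : (k : ℝ) / 2 ≤ ∑ i ∈ Finset.range k, q ^ i := by
      have hterm : ∀ i ∈ Finset.range k, q ^ k ≤ q ^ i := fun i hi =>
        pow_le_pow_of_le_one hq.1.le hq.2.le (Finset.mem_range.1 hi).le
      have : (k : ℝ) * q ^ k ≤ ∑ i ∈ Finset.range k, q ^ i := by
        calc (k : ℝ) * q ^ k = ∑ _i ∈ Finset.range k, q ^ k := by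
              rw [Finset.sum_const, Finset.card_range, nsmul_eq_mul]
          _ ≤ _ := Finset.sum_le_sum hterm
      nlinarith
    have hratio : (1 - q) / (1 - q ^ k) ≤ 2 / (k : ℝ) := by
      rw [one_sub_pow_eq k, div_mul_cancel_left₀ (ne_of_gt h1q) _]
      have hSpos : (0:ℝ) < ∑ i ∈ Finset.range k, q ^ i := sum_pos hq k hk
      rw [inv_eq_one_div]
      calc 1 / (∑ i ∈ Finset.range k, q ^ i) ≤ 1 / ((k : ℝ) / 2) :=
            one_div_le_one_div_of_le (by positivity) hS
        _ = 2 / (k : ℝ) := by rw [one_div_div]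
    calc (1 - q) ^ (t + 2) * F (t + 1) (q ^ k)
        ≤ ((t + 1).factorial : ℝ) * q ^ k * ((1 - q) / (1 - q ^ k)) ^ (t + 2) := hup
      _ ≤ ((t + 1).factorial : ℝ) * q ^ k * (2 / (k : ℝ)) ^ (t + 2) :=
          mul_le_mul_of_nonneg_left (pow_le_pow_left₀ hr0 hratio _) (by positivity)
      _ ≤ ((t + 1).factorial : ℝ) * 1 * (2 / (k : ℝ)) ^ (t + 2) := by
          have h2 : (0:ℝ) ≤ (2 / (k : ℝ)) ^ (t + 2) := by positivity
          exact mul_le_mul_of_nonneg_right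
            (mul_le_mul_of_nonneg_left hq1.le (by positivity)) h2
      _ = ((t + 1).factorial : ℝ) * 2 ^ (t + 2) / (k : ℝ) ^ (t + 2) := by
          rw [mul_one, div_pow]; ring
      _ ≤ ((t + 1).factorial : ℝ) * 2 ^ (t + 2) * ((t + 2).factorial : ℝ)
            / (k : ℝ) ^ (t + 2) := by
          rw [div_le_div_iff₀ hkpow hkpow]
          have hA : (0:ℝ) ≤ ((t + 1).factorial : ℝ) * 2 ^ (t + 2) := by positivity
          nlinarith [mul_nonneg (mul_nonneg hA hkpow.le) (sub_nonneg.2 hfac2)]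
  · have hqe : q ≤ Real.exp (q - 1) := by
      have := Real.add_one_le_exp (q - 1); linarith
    have hu : (0:ℝ) < (k : ℝ) * (1 - q) := mul_pos hkR h1q
    have hfacpos : (0:ℝ) < ((t + 2).factorial : ℝ) := by linarith
    have h1 : q ^ k ≤ (Real.exp ((k : ℝ) * (1 - q)))⁻¹ := by
      have h2 : q ^ k ≤ Real.exp (q - 1) ^ k := pow_le_pow_left₀ hq.1.le hqe k
      rw [← Real.exp_nat_mul] at h2
      rw [show (k : ℝ) * (q - 1) = -((k : ℝ) * (1 - q)) by ring, Real.exp_neg] at h2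
      exact h2
    have h3 : ((k : ℝ) * (1 - q)) ^ (t + 2) / ((t + 2).factorial : ℝ)
        ≤ Real.exp ((k : ℝ) * (1 - q)) := by
      refine le_trans ?_ (Real.sum_le_exp_of_nonneg hu.le (t + 3))
      exact Finset.single_le_sum
        (f := fun i => ((k : ℝ) * (1 - q)) ^ i / (i.factorial : ℝ))
        (fun i _ => by positivity)
        (show t + 2 ∈ Finset.range (t + 3) from Finset.mem_range.2 (by omega))
    have h4 : (Real.exp ((k : ℝ) * (1 - q)))⁻¹
        ≤ ((t + 2).factorial : ℝ) / ((k : ℝ) * (1 - q)) ^ (t + 2) := by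
      rw [inv_eq_one_div, div_le_div_iff₀ (Real.exp_pos _) (by positivity)]
      rw [div_le_iff₀ hfacpos] at h3
      nlinarith
    have hratio : (1 - q) / (1 - q ^ k) ≤ 2 * (1 - q) := by
      rw [div_le_iff₀ h1qk]
      nlinarith
    have key : q ^ k * (1 - q) ^ (t + 2) ≤ ((t + 2).factorial : ℝ) / (k : ℝ) ^ (t + 2) := by
      calc q ^ k * (1 - q) ^ (t + 2)
          ≤ (Real.exp ((k : ℝ) * (1 - q)))⁻¹ * (1 - q) ^ (t + 2) :=
            mul_le_mul_of_nonneg_right h1 (by positivity)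
        _ ≤ (((t + 2).factorial : ℝ) / ((k : ℝ) * (1 - q)) ^ (t + 2)) * (1 - q) ^ (t + 2) :=
            mul_le_mul_of_nonneg_right h4 (by positivity)
        _ = ((t + 2).factorial : ℝ) / (k : ℝ) ^ (t + 2) := by
            rw [mul_pow]
            field_simp
    calc (1 - q) ^ (t + 2) * F (t + 1) (q ^ k)
        ≤ ((t + 1).factorial : ℝ) * q ^ k * ((1 - q) / (1 - q ^ k)) ^ (t + 2) := hup
      _ ≤ ((t + 1).factorial : ℝ) * q ^ k * (2 * (1 - q)) ^ (t + 2) :=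
          mul_le_mul_of_nonneg_left (pow_le_pow_left₀ hr0 hratio _) (by positivity)
      _ = ((t + 1).factorial : ℝ) * 2 ^ (t + 2) * (q ^ k * (1 - q) ^ (t + 2)) := by
          rw [mul_pow]; ring
      _ ≤ ((t + 1).factorial : ℝ) * 2 ^ (t + 2)
            * (((t + 2).factorial : ℝ) / (k : ℝ) ^ (t + 2)) :=
          mul_le_mul_of_nonneg_left key (by positivity)
      _ = ((t + 1).factorial : ℝ) * 2 ^ (t + 2) * ((t + 2).factorial : ℝ)
            / (k : ℝ) ^ (t + 2) := by rw [mul_div_assoc]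


lemma row_summable {t : ℕ} {q : ℝ} (hq : q ∈ Ioo (0:ℝ) 1) :
    Summable (fun m : ℕ => ((m : ℝ) + 1) ^ (t + 1) * q ^ (m + 1) / (1 - q ^ (m + 1))) := by
  have h1q : (0:ℝ) < 1 - q := by linarith [hq.2]
  refine ((F_summable (p := t + 1) hq.1.le hq.2).mul_left (1 / (1 - q))).of_nonneg_of_le
    (fun m => ?_) (fun m => ?_)
  · have h2 : q ^ (m + 1) < 1 := pow_lt_one₀ hq.1.le hq.2 (by omega)
    have h3 : (0:ℝ) < 1 - q ^ (m + 1) := by linarith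
    have h4 : (0:ℝ) < q ^ (m + 1) := pow_pos hq.1 _
    exact div_nonneg (by positivity) h3.le
  · have h2 : q ^ (m + 1) ≤ q := by
      calc q ^ (m + 1) ≤ q ^ 1 := pow_le_pow_of_le_one hq.1.le hq.2.le (by omega)
        _ = q := pow_one q
    have h3 : (0:ℝ) < 1 - q ^ (m + 1) := by linarith
    have hA : (0:ℝ) ≤ ((m : ℝ) + 1) ^ (t + 1) * q ^ (m + 1) :=
      mul_nonneg (by positivity) (pow_pos hq.1 _).le
    calc ((m : ℝ) + 1) ^ (t + 1) * q ^ (m + 1) / (1 - q ^ (m + 1))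
        ≤ ((m : ℝ) + 1) ^ (t + 1) * q ^ (m + 1) / (1 - q) :=
          div_le_div_of_nonneg_left hA h1q (by linarith)
      _ = 1 / (1 - q) * (((m : ℝ) + 1) ^ (t + 1) * q ^ (m + 1)) := by
          rw [one_div_mul_eq_div]

lemma zeta_eq {t : ℕ} {q : ℝ} (hq : q ∈ Ioo (0:ℝ) 1) :
    ∑' m : ℕ, ((m : ℝ) + 1) ^ (t + 1) * q ^ (m + 1) / (1 - q ^ (m + 1))
      = ∑' k : ℕ, F (t + 1) (q ^ (k + 1)) := by
  set f : ℕ → ℕ → ℝ := fun m k => ((m : ℝ) + 1) ^ (t + 1) * (q ^ (m + 1)) ^ (k + 1) with hf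
  have hqm : ∀ m : ℕ, q ^ (m + 1) ∈ Ioo (0:ℝ) 1 := fun m =>
    ⟨pow_pos hq.1 _, pow_lt_one₀ hq.1.le hq.2 (by omega)⟩
  have hrow : ∀ m : ℕ, HasSum (f m)
      (((m : ℝ) + 1) ^ (t + 1) * q ^ (m + 1) / (1 - q ^ (m + 1))) := by
    intro m
    have hgeo := hasSum_geometric_of_lt_one (hqm m).1.le (hqm m).2
    have h2 := hgeo.mul_left (((m : ℝ) + 1) ^ (t + 1) * q ^ (m + 1))
    have h3 : (fun k : ℕ => ((m : ℝ) + 1) ^ (t + 1) * q ^ (m + 1) * (q ^ (m + 1)) ^ k)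
        = f m := by
      funext k
      rw [hf]
      simp only
      rw [pow_succ]
      ring
    rw [h3] at h2
    rwa [div_eq_mul_inv]
  have hswap : ∀ m k : ℕ, f m k = ((m : ℝ) + 1) ^ (t + 1) * (q ^ (k + 1)) ^ (m + 1) := by
    intro m k
    rw [hf]
    simp only
    rw [← pow_mul, ← pow_mul, Nat.mul_comm]
  have hcol : ∀ k : ℕ, Summable (fun m => f m k) := by
    intro k
    have h1 : (fun m => f m k)
        = fun m : ℕ => ((m : ℝ) + 1) ^ (t + 1) * (q ^ (k + 1)) ^ (m + 1) := by
      funext m; exact hswap m k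
    rw [h1]
    exact F_summable (hqm k).1.le (hqm k).2
  have hnn : 0 ≤ Function.uncurry f := by
    intro x
    simp only [Function.uncurry, hf, Pi.zero_apply]
    exact mul_nonneg (by positivity) (pow_nonneg (pow_nonneg hq.1.le _) _)
  have huncurry : Summable (Function.uncurry f) := by
    refine (summable_prod_of_nonneg hnn).2 ⟨fun m => (hrow m).summable, ?_⟩
    have h1 : (fun m : ℕ => ∑' k : ℕ, f m k)
        = fun m : ℕ => ((m : ℝ) + 1) ^ (t + 1) * q ^ (m + 1) / (1 - q ^ (m + 1)) := by
      funext m; exact (hrow m).tsum_eq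
    exact h1 ▸ row_summable hq
  calc ∑' m : ℕ, ((m : ℝ) + 1) ^ (t + 1) * q ^ (m + 1) / (1 - q ^ (m + 1))
      = ∑' (m : ℕ) (k : ℕ), f m k := by
        refine tsum_congr fun m => ?_
        exact (hrow m).tsum_eq.symm
    _ = ∑' (k : ℕ) (m : ℕ), f m k :=
        (huncurry.tsum_comm' (fun m => (hrow m).summable) hcol).symm
    _ = ∑' k : ℕ, F (t + 1) (q ^ (k + 1)) := by
        refine tsum_congr fun k => ?_
        rw [F]
        exact tsum_congr fun m => hswap m k

end ZetaqAux

/-- For `s ≥ 2`, `lim_{q→1⁻} (1-q)^s ζ_q(s) = (s-1)! ζ(s)`, where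
`ζ_q(s) = ∑_{m≥1} m^{s-1} q^m/(1-q^m)` and `ζ(s) = ∑_{m≥1} m^{-s}`. -/
theorem zetaq_limit_q_to_one (s : ℕ) (hs : 2 ≤ s) :
    Filter.Tendsto
      (fun q : ℝ =>
        (1 - q) ^ s * ∑' m : ℕ, ((m : ℝ) + 1) ^ (s - 1) * q ^ (m + 1) / (1 - q ^ (m + 1)))
      (nhdsWithin 1 (Set.Ioo 0 1))
      (nhds (((s - 1).factorial : ℝ) * ∑' m : ℕ, 1 / ((m : ℝ) + 1) ^ s)) := by
  open ZetaqAux Set Filter in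
  obtain ⟨t, rfl⟩ : ∃ t, s = t + 2 := ⟨s - 2, by omega⟩
  simp only [show t + 2 - 1 = t + 1 from rfl]
  have hbound_sum : Summable (fun n : ℕ =>
      ((t + 1).factorial : ℝ) * 2 ^ (t + 2) * ((t + 2).factorial : ℝ)
        / ((n : ℝ) + 1) ^ (t + 2)) := by
    have h0 : Summable (fun n : ℕ => 1 / ((n : ℝ) + 1) ^ (t + 2)) := by
      have h1 := Real.summable_one_div_nat_pow.2 (show 1 < t + 2 by omega)
      have h2 := (summable_nat_add_iff 1).2 h1
      refine h2.congr fun n => ?_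
      push_cast
      ring
    refine (h0.mul_left
      (((t + 1).factorial : ℝ) * 2 ^ (t + 2) * ((t + 2).factorial : ℝ))).congr fun n => ?_
    rw [mul_one_div]
  have hmain : Filter.Tendsto
      (fun q : ℝ => ∑' n : ℕ, (1 - q) ^ (t + 2) * F (t + 1) (q ^ (n + 1)))
      (nhdsWithin 1 (Ioo (0:ℝ) 1))
      (nhds (∑' n : ℕ, ((t + 1).factorial : ℝ) / ((n : ℝ) + 1) ^ (t + 2))) := by
    refine tendsto_tsum_of_dominated_convergence hbound_sum (fun n => ?_) ?_
    · have h1 := term_tendsto t (n + 1) (by omega)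
      have h2 : (((n + 1 : ℕ) : ℝ)) = (n : ℝ) + 1 := by push_cast; ring
      rwa [h2] at h1
    · filter_upwards [self_mem_nhdsWithin] with q hq n
      have hFnn : 0 ≤ F (t + 1) (q ^ (n + 1)) := F_nonneg (pow_pos hq.1 _).le
      have h1q : (0:ℝ) ≤ 1 - q := by linarith [hq.2]
      rw [Real.norm_eq_abs, abs_of_nonneg (mul_nonneg (by positivity) hFnn)]
      have h3 := term_bound t (n + 1) (by omega) hq
      have h2 : (((n + 1 : ℕ) : ℝ)) = (n : ℝ) + 1 := by push_cast; ring
      rwa [h2] at h3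
  have htarget : ∑' n : ℕ, ((t + 1).factorial : ℝ) / ((n : ℝ) + 1) ^ (t + 2)
      = ((t + 1).factorial : ℝ) * ∑' n : ℕ, 1 / ((n : ℝ) + 1) ^ (t + 2) := by
    rw [← tsum_mul_left]
    exact tsum_congr fun n => by rw [mul_one_div]
  rw [htarget] at hmain
  refine hmain.congr' ?_
  filter_upwards [self_mem_nhdsWithin] with q hq
  rw [tsum_mul_left, ← zeta_eq hq]
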